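/- Let N ≥ 2 and let A_N ∈ R^{(N-1)×(N-1)} be the matrix A_N = L_N S_N^T S_N R_N, where S_N is the N×N cyclic difference matrix with (S_N)_{n,n}=1, (S_N)_{n,n-1}=-1 (indices mod N), R_N ∈ R^{N×(N-1)} has the identity in its first N-1 rows and last row all entries -1, and L_N ∈ R^{(N-1)×N} has entries (L_N)_{i,j} = δ_{ij} - 1/N. Then det A_N = N^2; in particular A_N is invertible. -/

import Mathlib

open Matrix

/-- The cyclic difference matrix `S_N`: `1` on the diagonal, `-1` on the cyclic
subdiagonal (including position `(1,N)`). -/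
def Smat (N : ℕ) : Matrix (Fin N) (Fin N) ℝ :=
  Matrix.of fun i j =>
    if i = j then 1 else if (j : ℕ) = ((i : ℕ) + N - 1) % N then -1 else 0

/-- `R_N ∈ ℝ^{N×(N-1)}`: identity in the first `N-1` rows, last row all `-1`. -/
def Rmat (N : ℕ) : Matrix (Fin N) (Fin (N - 1)) ℝ :=
  Matrix.of fun i j =>
    if (i : ℕ) = N - 1 then -1 else if (i : ℕ) = (j : ℕ) then 1 else 0

/-- `L_N ∈ ℝ^{(N-1)×N}` with entries `δ_{ij} - 1/N`. -/
noncomputable def Lmat (N : ℕ) : Matrix (Fin (N - 1)) (Fin N) ℝ :=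
  Matrix.of fun i j => (if (i : ℕ) = (j : ℕ) then 1 else 0) - 1 / (N : ℝ)

open Finset

def Jmat (N : ℕ) : Matrix (Fin N) (Fin N) ℝ := Matrix.of fun _ _ => 1

lemma modlem (N a : ℕ) (hN : 2 ≤ N) (ha : a < N) :
    (a + N - 1) % N = if a = 0 then N - 1 else a - 1 := by
  rcases Nat.eq_zero_or_pos a with h | h
  · subst h; simp [Nat.mod_eq_of_lt (show 0 + N - 1 < N by omega)]
  · have h2 : a + N - 1 = (a - 1) + N := by omega
    rw [h2, Nat.add_mod_right, Nat.mod_eq_of_lt (by omega), if_neg (by omega)]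

/-- the cyclic predecessor -/
def iprev {N : ℕ} (hN : 2 ≤ N) (i : Fin N) : Fin N :=
  ⟨((i : ℕ) + N - 1) % N, Nat.mod_lt _ (by omega)⟩

lemma iprev_ne {N : ℕ} (hN : 2 ≤ N) (i : Fin N) : i ≠ iprev hN i := by
  rw [Fin.ne_iff_vne]
  show (i : ℕ) ≠ ((i : ℕ) + N - 1) % N
  rw [modlem N i hN i.isLt]
  have := i.isLt
  split <;> omega

lemma smat_eq {N : ℕ} (hN : 2 ≤ N) (i k : Fin N) :
    Smat N i k = (if k = i then 1 else 0) + (if k = iprev hN i then -1 else 0) := by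
  have hcond : ((k : ℕ) = ((i : ℕ) + N - 1) % N) ↔ k = iprev hN i :=
    ⟨fun h => Fin.ext h, fun h => by rw [h]; rfl⟩
  have hne := iprev_ne hN i
  by_cases h1 : i = k
  · subst h1; simp [Smat, hcond, hne, (Fin.ne_iff_vne _ _).mp hne]
  · simp [Smat, hcond, h1, Ne.symm h1]

lemma smat_rowsum {N : ℕ} (hN : 2 ≤ N) (i : Fin N) :
    ∑ k, Smat N i k = 0 := by
  simp [smat_eq hN i, Finset.sum_add_distrib]

lemma jnext_iprev {N : ℕ} (hN : 2 ≤ N) (j k : Fin N) :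
    j = iprev hN k ↔ k = ⟨((j : ℕ) + 1) % N, Nat.mod_lt _ (by omega)⟩ := by
  rw [Fin.ext_iff, Fin.ext_iff]
  show (j : ℕ) = ((k : ℕ) + N - 1) % N ↔ (k : ℕ) = ((j : ℕ) + 1) % N
  rw [modlem N k hN k.isLt]
  have h2 : ((j : ℕ) + 1) % N = if (j : ℕ) = N - 1 then 0 else (j : ℕ) + 1 := by
    rcases eq_or_ne (j : ℕ) (N - 1) with h | h
    · rw [if_pos h, h]
      have : N - 1 + 1 = N := by omega
      rw [this, Nat.mod_self]
    · rw [if_neg h, Nat.mod_eq_of_lt (by have := j.isLt; omega)]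
  rw [h2]
  have hj := j.isLt
  have hk := k.isLt
  split <;> split <;> omega

lemma smat_colsum {N : ℕ} (hN : 2 ≤ N) (j : Fin N) :
    ∑ k, Smat N k j = 0 := by
  have key : ∀ k : Fin N, Smat N k j
      = (if k = j then 1 else 0)
        + (if k = (⟨((j : ℕ) + 1) % N, Nat.mod_lt _ (by omega)⟩ : Fin N) then -1 else 0) := by
    intro k
    rw [smat_eq hN k j]
    congr 1
    · by_cases h : j = k <;> simp [h, Ne.symm, eq_comm]
    · by_cases h : j = iprev hN k
      · rw [if_pos h, if_pos ((jnext_iprev hN j k).mp h)]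
      · rw [if_neg h, if_neg (fun hc => h ((jnext_iprev hN j k).mpr hc))]
  simp [key, Finset.sum_add_distrib]

lemma count_ge {N : ℕ} (j : Fin N) :
    ∑ k : Fin N, (if (j : ℕ) ≤ (k : ℕ) then (1 : ℝ) else 0) = (N : ℝ) - (j : ℕ) := by
  have h1 : ∀ k : Fin N, ((j : ℕ) ≤ (k : ℕ)) = (j ≤ k) := by
    intro k; rw [eq_iff_iff]; exact (Fin.le_def).symm
  simp only [h1]
  rw [Finset.sum_boole, Finset.filter_le_eq_Ici, Fin.card_Ici]
  have := j.isLt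
  push_cast [Nat.cast_sub (le_of_lt this)]
  ring

section Tri

variable {N : ℕ} (hN : 2 ≤ N) (c : ℝ)

/-- row-summing matrix -/
noncomputable def Emat (N : ℕ) : Matrix (Fin N) (Fin N) ℝ :=
  Matrix.of fun i j => if (i : ℕ) = 0 then 1 else if i = j then 1 else 0

noncomputable def Fmat (N : ℕ) : Matrix (Fin N) (Fin N) ℝ :=
  Matrix.of fun i j =>
    (if i = j then 1 else 0) + (if (j : ℕ) = 0 ∧ (i : ℕ) ≠ 0 then -(1/(N:ℝ)) else 0)

noncomputable def Vmat (N : ℕ) : Matrix (Fin N) (Fin N) ℝ :=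
  Matrix.of fun k j => if (j : ℕ) ≤ (k : ℕ) then 1 else 0

noncomputable def Gmat (N : ℕ) (c : ℝ) : Matrix (Fin N) (Fin N) ℝ :=
  Matrix.of fun i j => if (i : ℕ) = 0 then c * N else Smat N i j + c

noncomputable def Hmat (N : ℕ) (c : ℝ) : Matrix (Fin N) (Fin N) ℝ :=
  Matrix.of fun i j => if (i : ℕ) = 0 then c * N else Smat N i j

noncomputable def Tmat (N : ℕ) (c : ℝ) : Matrix (Fin N) (Fin N) ℝ :=
  Matrix.of fun i j =>
    if (i : ℕ) = 0 then c * N * ((N : ℝ) - (j : ℕ)) else if i = j then 1 else 0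

lemma det_Emat : (Emat N).det = 1 := by
  rw [Matrix.det_of_upperTriangular]
  · have : ∀ i : Fin N, Emat N i i = 1 := by
      intro i; simp [Emat]
    simp [this]
  · intro i j hij
    have : (j : ℕ) < (i : ℕ) := hij
    simp only [Emat, Matrix.of_apply]
    rw [if_neg (by omega), if_neg (by exact fun h => by subst h; omega)]

lemma det_Fmat : (Fmat N).det = 1 := by
  rw [Matrix.det_of_lowerTriangular]
  · have : ∀ i : Fin N, Fmat N i i = 1 := by
      intro i; simp [Fmat]
    simp [this]
  · intro i j hij
    have hij' : (i : ℕ) < (j : ℕ) := hij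
    simp only [Fmat, Matrix.of_apply]
    rw [if_neg (by exact fun h => by subst h; omega), if_neg (by omega)]
    ring

lemma det_Vmat : (Vmat N).det = 1 := by
  rw [Matrix.det_of_lowerTriangular]
  · have : ∀ i : Fin N, Vmat N i i = 1 := by
      intro i; simp [Vmat]
    simp [this]
  · intro i j hij
    have hij' : (i : ℕ) < (j : ℕ) := hij
    simp only [Vmat, Matrix.of_apply]
    have hc : ¬((j : ℕ) ≤ (i : ℕ)) := by omega
    rw [if_neg hc]

include hN in
lemma det_Tmat : (Tmat N c).det = c * N * N := by
  have h0 : (0 : ℕ) < N := by have := hN; omega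
  rw [Matrix.det_of_upperTriangular]
  · rw [Finset.prod_eq_single (⟨0, h0⟩ : Fin N)]
    · simp [Tmat]
    · intro b _ hb
      have : (b : ℕ) ≠ 0 := by
        intro h; exact hb (Fin.ext h)
      simp [Tmat, this]
    · simp
  · intro i j hij
    have hij' : (j : ℕ) < (i : ℕ) := hij
    simp only [Tmat, Matrix.of_apply]
    rw [if_neg (by omega), if_neg (by exact fun h => by subst h; omega)]

end Tri

section Prod

variable {N : ℕ} (hN : 2 ≤ N) (c : ℝ)

include hN in
lemma E_mul : Emat N * (Smat N + c • Jmat N) = Gmat N c := by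
  ext i j
  rw [Matrix.mul_apply]
  by_cases hi : (i : ℕ) = 0
  · have step : ∀ k : Fin N, Emat N i k * (Smat N + c • Jmat N) k j = Smat N k j + c := by
      intro k
      simp [Emat, hi, Jmat, Matrix.add_apply, Matrix.smul_apply, smul_eq_mul]
    rw [Finset.sum_congr rfl fun k _ => step k, Finset.sum_add_distrib, smat_colsum hN j,
      Finset.sum_const, Finset.card_univ, Fintype.card_fin, zero_add, nsmul_eq_mul]
    simp [Gmat, hi, mul_comm]
  · have step : ∀ k : Fin N, Emat N i k * (Smat N + c • Jmat N) k j
        = (if i = k then 1 else 0) * ((Smat N + c • Jmat N) k j) := by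
      intro k; simp [Emat, hi]
    rw [Finset.sum_congr rfl fun k _ => step k]
    simp [Finset.sum_ite_eq, Gmat, hi, Jmat, Matrix.add_apply, Matrix.smul_apply, smul_eq_mul]

include hN in
lemma F_mul : Fmat N * Gmat N c = Hmat N c := by
  have h0 : (0 : ℕ) < N := by omega
  have hcond : ∀ k : Fin N, ((k : ℕ) = 0) = (k = ⟨0, h0⟩) := by
    intro k; rw [eq_iff_iff, Fin.ext_iff]
  ext i j
  rw [Matrix.mul_apply]
  have split : ∀ k : Fin N, Fmat N i k * Gmat N c k j
      = (if i = k then 1 else 0) * Gmat N c k j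
        + (if (k : ℕ) = 0 ∧ (i : ℕ) ≠ 0 then -(1/(N:ℝ)) else 0) * Gmat N c k j := by
    intro k; rw [Fmat]; simp [add_mul]
  rw [Finset.sum_congr rfl fun k _ => split k, Finset.sum_add_distrib]
  by_cases hi : (i : ℕ) = 0
  · have s1 : ∑ k : Fin N, (if i = k then 1 else 0) * Gmat N c k j = Gmat N c i j := by
      simp [Finset.sum_ite_eq]
    have s2 : ∑ k : Fin N,
        (if (k : ℕ) = 0 ∧ (i : ℕ) ≠ 0 then -(1/(N:ℝ)) else 0) * Gmat N c k j = 0 := by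
      apply Finset.sum_eq_zero; intro k _
      rw [if_neg (fun hc => hc.2 hi), zero_mul]
    rw [s1, s2, add_zero]
    simp [Gmat, Hmat, hi]
  · have s1 : ∑ k : Fin N, (if i = k then 1 else 0) * Gmat N c k j = Gmat N c i j := by
      simp [Finset.sum_ite_eq]
    have s2 : ∑ k : Fin N,
        (if (k : ℕ) = 0 ∧ (i : ℕ) ≠ 0 then -(1/(N:ℝ)) else 0) * Gmat N c k j = -c := by
      have : ∀ k : Fin N, (if (k : ℕ) = 0 ∧ (i : ℕ) ≠ 0 then -(1/(N:ℝ)) else 0) * Gmat N c k j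
          = if k = ⟨0, h0⟩ then -(1/(N:ℝ)) * Gmat N c k j else 0 := by
        intro k
        by_cases hk : (k : ℕ) = 0
        · rw [if_pos ⟨hk, hi⟩, if_pos ((hcond k).mp hk)]
        · rw [if_neg (fun hc => hk hc.1), if_neg (fun hc => hk ((hcond k).mpr hc ▸ rfl)), zero_mul]
      rw [Finset.sum_congr rfl fun k _ => this k, Finset.sum_ite_eq']
      have hNne : (N : ℝ) ≠ 0 := by positivity
      simp [Gmat]
      field_simp
    rw [s1, s2]
    simp only [Gmat, Hmat, Matrix.of_apply, if_neg hi]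
    ring

include hN in
lemma H_mul : Hmat N c * Vmat N = Tmat N c := by
  ext i j
  rw [Matrix.mul_apply]
  by_cases hi : (i : ℕ) = 0
  · have step : ∀ k : Fin N, Hmat N c i k * Vmat N k j
        = (c * N) * (if (j : ℕ) ≤ (k : ℕ) then (1:ℝ) else 0) := by
      intro k; simp [Hmat, Vmat, hi]
    rw [Finset.sum_congr rfl fun k _ => step k, ← Finset.mul_sum, count_ge]
    simp [Tmat, hi]
  · have step : ∀ k : Fin N, Hmat N c i k * Vmat N k j
        = (if k = i then 1 else 0) * Vmat N k j + (if k = iprev hN i then -1 else 0) * Vmat N k j := by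
      intro k
      rw [Hmat]
      simp only [Matrix.of_apply, if_neg hi]
      rw [smat_eq hN i k, add_mul]
    rw [Finset.sum_congr rfl fun k _ => step k, Finset.sum_add_distrib]
    simp only [Finset.sum_ite_eq', Finset.mem_univ, if_true, ite_mul, one_mul, neg_mul, zero_mul]
    have hval : ((iprev hN i : Fin N) : ℕ) = (i : ℕ) - 1 := by
      show ((i : ℕ) + N - 1) % N = (i : ℕ) - 1
      rw [modlem N i hN i.isLt, if_neg hi]
    simp only [Vmat, Matrix.of_apply, hval, Tmat]
    have hiLt := i.isLt
    by_cases hij : i = j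
    · subst hij
      rw [if_pos (le_refl _), if_neg (by omega : ¬ (i : ℕ) ≤ (i : ℕ) - 1), if_neg hi, if_pos rfl]
      norm_num
    · have hvij : (i : ℕ) ≠ (j : ℕ) := fun h => hij (Fin.ext h)
      rw [if_neg hi, if_neg hij]
      by_cases h1 : (j : ℕ) ≤ (i : ℕ)
      · rw [if_pos h1, if_pos (by omega : (j : ℕ) ≤ (i : ℕ) - 1)]
        norm_num
      · rw [if_neg h1, if_neg (by omega : ¬ (j : ℕ) ≤ (i : ℕ) - 1)]
        norm_num

include hN in
lemma det_S_add_smul_J : (Smat N + c • Jmat N).det = c * (N : ℝ) ^ 2 := by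
  have key : (Smat N + c • Jmat N).det = (Tmat N c).det := by
    have e1 := congrArg Matrix.det (E_mul hN c)
    have e2 := congrArg Matrix.det (F_mul hN c)
    have e3 := congrArg Matrix.det (H_mul hN c)
    rw [Matrix.det_mul] at e1 e2 e3
    rw [det_Emat, one_mul] at e1
    rw [det_Fmat, one_mul] at e2
    rw [det_Vmat, mul_one] at e3
    rw [e1, e2, e3]
  rw [key, det_Tmat hN]
  ring

end Prod

section Blocks

variable {N : ℕ} (hN : 2 ≤ N)

def pcol (N : ℕ) : Matrix (Fin N) (Fin 1) ℝ := Matrix.of fun _ _ => 1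

noncomputable def qrow (N : ℕ) : Matrix (Fin 1) (Fin N) ℝ := Matrix.of fun _ _ => (N : ℝ)⁻¹

include hN in
lemma ST_mul_J : (Smat N)ᵀ * Jmat N = 0 := by
  ext i j
  rw [Matrix.mul_apply]
  simp only [Matrix.transpose_apply, Jmat, Matrix.of_apply, mul_one]
  rw [smat_colsum hN i]
  rfl

include hN in
lemma J_mul_S : Jmat N * Smat N = 0 := by
  ext i j
  rw [Matrix.mul_apply]
  simp only [Jmat, Matrix.of_apply, one_mul]
  rw [smat_colsum hN j]
  rfl

lemma J_mul_J : Jmat N * Jmat N = (N : ℝ) • Jmat N := by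
  ext i j
  rw [Matrix.mul_apply]
  simp [Jmat]

include hN in
lemma factorX :
    ((Smat N)ᵀ + Jmat N) * (Smat N + ((N : ℝ))⁻¹ • Jmat N)
      = (Smat N)ᵀ * Smat N + Jmat N := by
  have hNne : (N : ℝ) ≠ 0 := by positivity
  rw [add_mul, mul_add, mul_add, Matrix.mul_smul, Matrix.mul_smul,
    ST_mul_J hN, J_mul_S hN, J_mul_J]
  rw [smul_zero, smul_smul, inv_mul_cancel₀ hNne, one_smul]
  abel

include hN in
lemma detX : ((Smat N)ᵀ * Smat N + Jmat N).det = (N : ℝ) ^ 3 := by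
  have hNne : (N : ℝ) ≠ 0 := by positivity
  rw [← factorX hN, Matrix.det_mul]
  have h1 : (Smat N)ᵀ + Jmat N = (Smat N + (1 : ℝ) • Jmat N)ᵀ := by
    ext i j
    simp [Jmat, Matrix.transpose_apply, Matrix.add_apply, Matrix.smul_apply]
  rw [h1, Matrix.det_transpose, det_S_add_smul_J hN, det_S_add_smul_J hN]
  field_simp

include hN in
lemma colsumR (j : Fin (N - 1)) : ∑ k : Fin N, Rmat N k j = 0 := by
  have hj : (j : ℕ) < N - 1 := j.isLt
  have key : ∀ k : Fin N, Rmat N k j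
      = (if k = (⟨N - 1, by omega⟩ : Fin N) then -1 else 0)
        + (if k = (⟨(j : ℕ), by omega⟩ : Fin N) then 1 else 0) := by
    intro k
    simp only [Rmat, Matrix.of_apply, Fin.ext_iff]
    by_cases h1 : (k : ℕ) = N - 1
    · rw [if_pos h1, if_pos h1, if_neg (by omega), add_zero]
    · rw [if_neg h1, if_neg h1, zero_add]
  simp [key, Finset.sum_add_distrib]

include hN in
lemma L_mul_R : Lmat N * Rmat N = 1 := by
  ext i j
  rw [Matrix.mul_apply]
  have hi : (i : ℕ) < N - 1 := i.isLt
  have step : ∀ k : Fin N, Lmat N i k * Rmat N k j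
      = (if k = (⟨(i : ℕ), by omega⟩ : Fin N) then 1 else 0) * Rmat N k j
        - (N : ℝ)⁻¹ * Rmat N k j := by
    intro k
    simp only [Lmat, Matrix.of_apply, Fin.ext_iff, sub_mul, one_div]
    by_cases h : (i : ℕ) = (k : ℕ)
    · rw [if_pos h, if_pos h.symm]
    · rw [if_neg h, if_neg (fun hc => h hc.symm)]
  rw [Finset.sum_congr rfl fun k _ => step k, Finset.sum_sub_distrib, ← Finset.mul_sum,
    colsumR hN j, mul_zero, sub_zero]
  simp only [ite_mul, one_mul, zero_mul]
  rw [Finset.sum_ite_eq']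
  simp only [Finset.mem_univ, if_true]
  have hne2 : ¬ ((i : ℕ) = N - 1) := by omega
  rcases eq_or_ne i j with h | h
  · subst h; simp [Rmat, Matrix.one_apply, hne2]
  · have hv : (i : ℕ) ≠ (j : ℕ) := fun hc => h (Fin.ext hc)
    simp [Rmat, Matrix.one_apply, h, hv, hne2]

include hN in
lemma L_rowsum (i : Fin (N - 1)) : ∑ k : Fin N, Lmat N i k = 0 := by
  have hi : (i : ℕ) < N - 1 := i.isLt
  have hNne : (N : ℝ) ≠ 0 := by positivity
  have key : ∀ k : Fin N, Lmat N i k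
      = (if k = (⟨(i : ℕ), by omega⟩ : Fin N) then 1 else 0) - (N : ℝ)⁻¹ := by
    intro k
    simp only [Lmat, Matrix.of_apply, Fin.ext_iff, one_div]
    by_cases h : (i : ℕ) = (k : ℕ)
    · rw [if_pos h, if_pos h.symm]
    · rw [if_neg h, if_neg (fun hc => h hc.symm)]
  rw [Finset.sum_congr rfl fun k _ => key k, Finset.sum_sub_distrib, Finset.sum_ite_eq']
  simp [hNne, Finset.card_univ]

include hN in
lemma L_mul_p : Lmat N * pcol N = 0 := by
  ext i j
  rw [Matrix.mul_apply]
  simp only [pcol, Matrix.of_apply, mul_one]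
  rw [L_rowsum hN i]
  rfl

include hN in
lemma q_mul_R : qrow N * Rmat N = 0 := by
  ext i j
  rw [Matrix.mul_apply]
  simp only [qrow, Matrix.of_apply]
  rw [← Finset.mul_sum, colsumR hN j, mul_zero]
  rfl

include hN in
lemma q_mul_p : qrow N * pcol N = 1 := by
  have hNne : (N : ℝ) ≠ 0 := by positivity
  ext i j
  rw [Matrix.mul_apply]
  simp [qrow, pcol, Finset.card_univ, hNne]
  rw [Subsingleton.elim j i, Matrix.one_apply_eq]

include hN in
lemma S_mul_p : Smat N * pcol N = 0 := by
  ext i j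
  rw [Matrix.mul_apply]
  simp only [pcol, Matrix.of_apply, mul_one]
  rw [smat_rowsum hN i]
  rfl

include hN in
lemma q_mul_ST : qrow N * (Smat N)ᵀ = 0 := by
  ext i j
  rw [Matrix.mul_apply]
  simp only [qrow, Matrix.of_apply, Matrix.transpose_apply]
  rw [← Finset.mul_sum, smat_rowsum hN j, mul_zero]
  rfl

lemma J_mul_p : Jmat N * pcol N = (N : ℝ) • pcol N := by
  ext i j
  rw [Matrix.mul_apply]
  simp [Jmat, pcol, Finset.card_univ]

lemma q_mul_J : qrow N * Jmat N = (N : ℝ) • qrow N := by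
  ext i j
  rw [Matrix.mul_apply]
  simp [Jmat, qrow, Finset.card_univ]

end Blocks

section Final

variable {N : ℕ} (hN : 2 ≤ N)

include hN in
lemma L_mul_J : Lmat N * Jmat N = 0 := by
  ext i j
  rw [Matrix.mul_apply]
  simp only [Jmat, Matrix.of_apply, mul_one]
  rw [L_rowsum hN i]
  rfl

include hN in
lemma X_mul_p : ((Smat N)ᵀ * Smat N + Jmat N) * pcol N = (N : ℝ) • pcol N := by
  rw [Matrix.add_mul, Matrix.mul_assoc, S_mul_p hN, Matrix.mul_zero, zero_add, J_mul_p]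

include hN in
lemma q_mul_X : qrow N * ((Smat N)ᵀ * Smat N + Jmat N) = (N : ℝ) • qrow N := by
  rw [Matrix.mul_add, ← Matrix.mul_assoc, q_mul_ST hN, Matrix.zero_mul, zero_add, q_mul_J]

end Final

/-- `det (L_N S_Nᵀ S_N R_N) = N²`; in particular `A_N` is invertible. -/
theorem stmt4 (N : ℕ) (hN : 2 ≤ N) :
    (Lmat N * (Smat N)ᵀ * Smat N * Rmat N).det = (N : ℝ) ^ 2 := by
  obtain ⟨n, rfl⟩ : ∃ n, N = n + 2 := ⟨N - 2, by omega⟩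
  have hN2 : 2 ≤ n + 2 := by omega
  set M : ℕ := n + 2 with hM
  have hMne : (M : ℝ) ≠ 0 := by positivity
  set X : Matrix (Fin M) (Fin M) ℝ := (Smat M)ᵀ * Smat M + Jmat M with hX
  set A : Matrix (Fin (M - 1)) (Fin (M - 1)) ℝ
    := Lmat M * (Smat M)ᵀ * Smat M * Rmat M with hA
  set Q : Matrix (Fin (M - 1) ⊕ Fin 1) (Fin M) ℝ := fromRows (Lmat M) (qrow M) with hQ
  set P : Matrix (Fin M) (Fin (M - 1) ⊕ Fin 1) ℝ := fromCols (Rmat M) (pcol M) with hP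
  -- the four blocks of Q * X * P
  have h11 : Lmat M * X * Rmat M = A := by
    rw [hX, Matrix.mul_add, Matrix.add_mul, L_mul_J hN2, Matrix.zero_mul, add_zero, hA]
    simp only [Matrix.mul_assoc]
  have h12 : Lmat M * X * pcol M = 0 := by
    rw [Matrix.mul_assoc, X_mul_p hN2, Matrix.mul_smul, L_mul_p hN2, smul_zero]
  have h21 : qrow M * X * Rmat M = 0 := by
    rw [q_mul_X hN2, Matrix.smul_mul, q_mul_R hN2, smul_zero]
  have h22 : qrow M * X * pcol M = (M : ℝ) • (1 : Matrix (Fin 1) (Fin 1) ℝ) := by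
    rw [q_mul_X hN2, Matrix.smul_mul, q_mul_p hN2]
  have hQXP : Q * X * P
      = fromBlocks A 0 0 ((M : ℝ) • (1 : Matrix (Fin 1) (Fin 1) ℝ)) := by
    rw [hQ, hP, Matrix.fromRows_mul, Matrix.fromRows_mul_fromCols, h11, h12, h21, h22]
  have hQP : Q * P = 1 := by
    rw [hQ, hP, Matrix.fromRows_mul_fromCols, L_mul_R hN2, L_mul_p hN2, q_mul_R hN2,
      q_mul_p hN2, Matrix.fromBlocks_one]
  -- reindex to square matrices over Fin M
  let e : Fin (M - 1) ⊕ Fin 1 ≃ Fin M := finSumFinEquiv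
  have key : ∀ Y : Matrix (Fin M) (Fin M) ℝ,
      (Q.submatrix (⇑e.symm) id) * Y * (P.submatrix id (⇑e.symm))
        = (Q * Y * P).submatrix (⇑e.symm) (⇑e.symm) := by
    intro Y
    have h1 : Q.submatrix (⇑e.symm) id * Y = (Q * Y).submatrix (⇑e.symm) id := by
      have := Matrix.submatrix_mul_equiv Q Y (⇑e.symm) (Equiv.refl (Fin M)) id
      simpa using this
    have h2 : (Q * Y).submatrix (⇑e.symm) id * P.submatrix id (⇑e.symm)
        = ((Q * Y) * P).submatrix (⇑e.symm) (⇑e.symm) := by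
      have := Matrix.submatrix_mul_equiv (Q * Y) P (⇑e.symm) (Equiv.refl (Fin M)) (⇑e.symm)
      simpa using this
    rw [h1, h2]
  have hQP' : (Q.submatrix (⇑e.symm) id) * 1 * (P.submatrix id (⇑e.symm)) = 1 := by
    rw [key 1, Matrix.mul_one, hQP, Matrix.submatrix_one_equiv]
  rw [Matrix.mul_one] at hQP'
  have hdets : (Q.submatrix (⇑e.symm) id).det * (P.submatrix id (⇑e.symm)).det = 1 := by
    have := congrArg Matrix.det hQP'
    rwa [Matrix.det_mul, Matrix.det_one] at this
  have h3 : (Q.submatrix (⇑e.symm) id) * X * (P.submatrix id (⇑e.symm))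
      = (fromBlocks A 0 0 ((M : ℝ) • (1 : Matrix (Fin 1) (Fin 1) ℝ))).submatrix
          (⇑e.symm) (⇑e.symm) := by
    rw [key X, hQXP]
  have h4 := congrArg Matrix.det h3
  rw [Matrix.det_mul, Matrix.det_mul, Matrix.det_submatrix_equiv_self,
    Matrix.det_fromBlocks_zero₂₁] at h4
  have h5 : ((M : ℝ) • (1 : Matrix (Fin 1) (Fin 1) ℝ)).det = (M : ℝ) := by
    simp
  rw [h5] at h4
  have h6 : X.det = A.det * (M : ℝ) := by
    calc X.det = ((Q.submatrix (⇑e.symm) id).det * (P.submatrix id (⇑e.symm)).det) * X.det := by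
          rw [hdets, one_mul]
      _ = (Q.submatrix (⇑e.symm) id).det * X.det * (P.submatrix id (⇑e.symm)).det := by ring
      _ = A.det * (M : ℝ) := h4
  have h7 : X.det = (M : ℝ) ^ 3 := detX hN2
  have h8 : A.det * (M : ℝ) = (M : ℝ) ^ 2 * (M : ℝ) := by
    rw [← h6, h7]; ring
  exact mul_right_cancel₀ hMne h8
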